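/- For any nonnegative square matrix A and any integer n ≥ 1, and any indices i,j, we have (A^n)_{i,j}^2 + (A^n)_{j,i}^2 ≥ 2·(Ā^n)_{i,j}^2, where Ā(i,j) = sqrt(A(i,j)·A(j,i)). -/
import Mathlib

private lemma pow_entry_nonneg {n : ℕ} (B : Matrix (Fin n) (Fin n) ℝ)
    (hB : ∀ i j, 0 ≤ B i j) (k : ℕ) : ∀ i j, 0 ≤ (B ^ k) i j := by
  induction k with
  | zero => intro i j; simp [Matrix.one_apply]; split <;> norm_num
  | succ m ih =>
    intro i j
    rw [pow_succ', Matrix.mul_apply]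
    exact Finset.sum_nonneg fun m _ => mul_nonneg (hB _ _) (ih _ _)

private lemma key {n : ℕ} (A : Matrix (Fin n) (Fin n) ℝ) (hA : ∀ i j, 0 ≤ A i j) (k : ℕ) :
    ∀ i j, (((Matrix.of fun a b => Real.sqrt (A a b * A b a)) ^ k) i j) ^ 2 ≤
      (A ^ k) i j * (A ^ k) j i := by
  set B : Matrix (Fin n) (Fin n) ℝ := Matrix.of fun a b => Real.sqrt (A a b * A b a) with hB
  have hBnn : ∀ i j, 0 ≤ B i j := fun i j => Real.sqrt_nonneg _
  induction k with
  | zero =>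
    intro i j
    simp only [pow_zero, Matrix.one_apply]
    by_cases h : i = j <;> simp [h, Eq.symm]
  | succ m ih =>
    intro i j
    have eB : (B ^ (m + 1)) i j = ∑ m' : Fin n, B i m' * (B ^ m) m' j := by
      rw [pow_succ', Matrix.mul_apply]
    have eA1 : (A ^ (m + 1)) i j = ∑ m' : Fin n, A i m' * (A ^ m) m' j := by
      rw [pow_succ', Matrix.mul_apply]
    have eA2 : (A ^ (m + 1)) j i = ∑ m' : Fin n, A m' i * (A ^ m) j m' := by
      rw [pow_succ A m, Matrix.mul_apply]
      exact Finset.sum_congr rfl fun m' _ => mul_comm _ _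
    rw [eB, eA1, eA2]
    have hstep : ∀ m' : Fin n, B i m' * (B ^ m) m' j ≤
        Real.sqrt (A i m' * (A ^ m) m' j) * Real.sqrt (A m' i * (A ^ m) j m') := by
      intro m'
      have h1 : (B ^ m) m' j ≤ Real.sqrt ((A ^ m) m' j * (A ^ m) j m') := by
        rw [← Real.sqrt_sq (pow_entry_nonneg B hBnn m m' j)]
        exact Real.sqrt_le_sqrt (ih m' j)
      calc B i m' * (B ^ m) m' j
          ≤ Real.sqrt (A i m' * A m' i) * Real.sqrt ((A ^ m) m' j * (A ^ m) j m') := by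
            exact mul_le_mul_of_nonneg_left h1 (hBnn i m')
        _ = Real.sqrt (A i m' * (A ^ m) m' j) * Real.sqrt (A m' i * (A ^ m) j m') := by
            rw [← Real.sqrt_mul (mul_nonneg (hA _ _) (hA _ _)),
              ← Real.sqrt_mul (mul_nonneg (hA _ _) (pow_entry_nonneg A hA m _ _))]
            ring_nf
    have hsum : ∑ m' : Fin n, B i m' * (B ^ m) m' j ≤
        ∑ m' : Fin n, Real.sqrt (A i m' * (A ^ m) m' j) * Real.sqrt (A m' i * (A ^ m) j m') :=
      Finset.sum_le_sum fun m' _ => hstep m'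
    have hnn : 0 ≤ ∑ m' : Fin n, B i m' * (B ^ m) m' j :=
      Finset.sum_nonneg fun m' _ => mul_nonneg (hBnn _ _) (pow_entry_nonneg B hBnn m _ _)
    calc (∑ m' : Fin n, B i m' * (B ^ m) m' j) ^ 2
        ≤ (∑ m' : Fin n, Real.sqrt (A i m' * (A ^ m) m' j) *
            Real.sqrt (A m' i * (A ^ m) j m')) ^ 2 := by
          apply pow_le_pow_left₀ hnn hsum
      _ ≤ (∑ m' : Fin n, Real.sqrt (A i m' * (A ^ m) m' j) ^ 2) *
          ∑ m' : Fin n, Real.sqrt (A m' i * (A ^ m) j m') ^ 2 :=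
          Finset.sum_mul_sq_le_sq_mul_sq _ _ _
      _ = (∑ m' : Fin n, A i m' * (A ^ m) m' j) * ∑ m' : Fin n, A m' i * (A ^ m) j m' := by
          congr 1 <;> refine Finset.sum_congr rfl fun m' _ => Real.sq_sqrt ?_
          · exact mul_nonneg (hA _ _) (pow_entry_nonneg A hA m _ _)
          · exact mul_nonneg (hA _ _) (pow_entry_nonneg A hA m _ _)

theorem stmt2 {n : ℕ} (A : Matrix (Fin n) (Fin n) ℝ) (hA : ∀ i j, 0 ≤ A i j)
    (k : ℕ) (hk : 1 ≤ k) (i j : Fin n) :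
    2 * (((Matrix.of fun a b => Real.sqrt (A a b * A b a)) ^ k) i j) ^ 2 ≤
      ((A ^ k) i j) ^ 2 + ((A ^ k) j i) ^ 2 := by
  have h := key A hA k i j
  have h2 := two_mul_le_add_sq ((A ^ k) i j) ((A ^ k) j i)
  nlinarith [h, h2]
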